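/- Weak-* convergence of oscillating coefficient with variable period: Under hypothesis (H2) (G continuous in x uniformly in y, l(x)-periodic in y, l continuous with 0 < L' ≤ l ≤ L, 0 ≤ G ≤ G₁) and α > 1, the functions G_ε(x) = G(x, x/ε^α) converge weak-* in L^∞(0,1) to the local average x ↦ (1/l(x)) ∫_0^{l(x)} G(x,s) ds, i.e., for every φ ∈ L¹(0,1), ∫_0^1 G_ε(x) φ(x) dx → ∫_0^1 ( (1/l(x)) ∫_0^{l(x)} G(x,s) ds ) φ(x) dx as ε → 0. -/

import Mathlib

open Set Filter MeasureTheory intervalIntegral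

lemma averaging {g : ℝ → ℝ} {T G₁ : ℝ} (hT : 0 < T) (hg : Function.Periodic g T)
    (hgc : Continuous g) (h0 : ∀ y, 0 ≤ g y) (h1 : ∀ y, g y ≤ G₁) {A B : ℝ} (hAB : A ≤ B) :
    |(∫ x in A..B, g x) - (B - A) / T * ∫ x in (0:ℝ)..T, g x| ≤ 2 * T * G₁ := by
  have hG₁ : 0 ≤ G₁ := le_trans (h0 0) (h1 0)
  have hint : ∀ t s : ℝ, IntervalIntegrable g MeasureTheory.volume t s :=
    fun t s => hgc.intervalIntegrable t s
  set n : ℤ := ⌊(B - A) / T⌋ with hn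
  have hn0 : (0:ℤ) ≤ n := Int.floor_nonneg.2 (div_nonneg (by linarith) hT.le)
  have hfl : (n : ℝ) ≤ (B - A) / T := Int.floor_le _
  have hfl' : (B - A) / T < n + 1 := Int.lt_floor_add_one _
  set I : ℝ := ∫ x in (0:ℝ)..T, g x with hI
  have hIbd : 0 ≤ I ∧ I ≤ T * G₁ := by
    constructor
    · exact intervalIntegral.integral_nonneg hT.le (fun x _ => h0 x)
    · calc I ≤ ∫ x in (0:ℝ)..T, G₁ := by
            apply intervalIntegral.integral_mono_on hT.le (hint 0 T)
              (intervalIntegrable_const) (fun x _ => h1 x)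
      _ = T * G₁ := by simp [mul_comm]
  have key : (∫ x in A..(A + n • T), g x) = n • I := by
    rw [hg.intervalIntegral_add_zsmul_eq n A hint, hg.intervalIntegral_add_eq A 0]
    norm_num
    exact Or.inl hI.symm
  have hsplit : (∫ x in A..B, g x) = (∫ x in A..(A + n • T), g x) + ∫ x in (A + n • T)..B, g x :=
    (intervalIntegral.integral_add_adjacent_intervals (hint _ _) (hint _ _)).symm
  have h1' : (n:ℝ) * T ≤ B - A := (le_div_iff₀ hT).1 hfl
  have h2' : B - A < ((n:ℝ) + 1) * T := (div_lt_iff₀ hT).1 hfl'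
  have hle1 : A + n • T ≤ B := by simp only [zsmul_eq_mul]; linarith
  have hle2 : B - (A + n • T) ≤ T := by simp only [zsmul_eq_mul]; linarith
  set R : ℝ := ∫ x in (A + n • T)..B, g x with hR
  have hRbd : 0 ≤ R ∧ R ≤ T * G₁ := by
    constructor
    · exact intervalIntegral.integral_nonneg hle1 (fun x _ => h0 x)
    · calc R ≤ ∫ x in (A + n • T)..B, G₁ :=
            intervalIntegral.integral_mono_on hle1 (hint _ _) intervalIntegrable_const
              (fun x _ => h1 x)
      _ = (B - (A + n • T)) * G₁ := by simp [mul_comm]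
      _ ≤ T * G₁ := by nlinarith
  have hθ : (B - A) / T * I = (n:ℝ) * I + ((B - A)/T - n) * I := by ring
  have hθbd : 0 ≤ ((B - A)/T - n) * I ∧ ((B - A)/T - n) * I ≤ T * G₁ := by
    constructor
    · exact mul_nonneg (by linarith) hIbd.1
    · nlinarith [hIbd.1, hIbd.2]
  rw [hsplit, key, hθ]
  simp only [zsmul_eq_mul]
  rw [abs_le]
  constructor <;> linarith [hRbd.1, hRbd.2, hθbd.1, hθbd.2]

set_option maxHeartbeats 2000000 in
theorem stmt17 (G : ℝ → ℝ → ℝ) (l : ℝ → ℝ) (L L' G₁ α : ℝ)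
    (hL' : 0 < L') (hlL : ∀ x ∈ Icc (0:ℝ) 1, L' ≤ l x ∧ l x ≤ L)
    (hlcont : ContinuousOn l (Icc (0:ℝ) 1))
    (hGbd : ∀ x ∈ Icc (0:ℝ) 1, ∀ y : ℝ, 0 ≤ G x y ∧ G x y ≤ G₁)
    (hGy : ∀ x ∈ Icc (0:ℝ) 1, Continuous (fun y => G x y))
    (hper : ∀ x ∈ Icc (0:ℝ) 1, ∀ y : ℝ, G x (y + l x) = G x y)
    (hunif : ∀ η : ℝ, 0 < η → ∃ δ : ℝ, 0 < δ ∧ ∀ x ∈ Icc (0:ℝ) 1, ∀ x' ∈ Icc (0:ℝ) 1,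
      |x - x'| < δ → ∀ y : ℝ, |G x y - G x' y| ≤ η)
    (hα : 1 < α) :
    ∀ φ : ℝ → ℝ,
      MeasureTheory.IntegrableOn φ (Ioo (0:ℝ) 1) MeasureTheory.volume →
      Tendsto (fun ε : ℝ => ∫ x in (0:ℝ)..1, G x (x / ε ^ α) * φ x)
        (nhdsWithin 0 (Ioi 0))
        (nhds (∫ x in (0:ℝ)..1, ((1 / l x) * ∫ s in (0:ℝ)..(l x), G x s) * φ x)) := by
  have h01 : (0:ℝ) ∈ Icc (0:ℝ) 1 := by norm_num
  have hG₁ : 0 ≤ G₁ := le_trans (hGbd 0 h01 0).1 (hGbd 0 h01 0).2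
  have hLL' : L' ≤ L := le_trans (hlL 0 h01).1 (hlL 0 h01).2
  have hL : 0 < L := lt_of_lt_of_le hL' hLL'
  set F : ℝ → ℝ := fun x => (1 / l x) * ∫ s in (0:ℝ)..(l x), G x s with hFdef
  have hlpos : ∀ x ∈ Icc (0:ℝ) 1, 0 < l x := fun x hx => lt_of_lt_of_le hL' (hlL x hx).1
  -- bounds on F
  have hFbd : ∀ x ∈ Icc (0:ℝ) 1, 0 ≤ F x ∧ F x ≤ G₁ := by
    intro x hx
    have hlx := hlpos x hx
    have hI0 : 0 ≤ ∫ s in (0:ℝ)..(l x), G x s :=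
      intervalIntegral.integral_nonneg hlx.le (fun s _ => (hGbd x hx s).1)
    have hI1 : (∫ s in (0:ℝ)..(l x), G x s) ≤ l x * G₁ := by
      calc (∫ s in (0:ℝ)..(l x), G x s) ≤ ∫ s in (0:ℝ)..(l x), G₁ :=
            intervalIntegral.integral_mono_on hlx.le ((hGy x hx).intervalIntegrable 0 (l x))
              intervalIntegrable_const (fun s _ => (hGbd x hx s).2)
        _ = l x * G₁ := by simp [mul_comm]
    constructor
    · exact mul_nonneg (by positivity) hI0
    · rw [hFdef]
      have : (1 / l x) * (∫ s in (0:ℝ)..(l x), G x s) ≤ (1 / l x) * (l x * G₁) :=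
        mul_le_mul_of_nonneg_left hI1 (by positivity)
      calc (1 / l x) * (∫ s in (0:ℝ)..(l x), G x s) ≤ (1 / l x) * (l x * G₁) := this
        _ = G₁ := by field_simp
  -- joint continuity of x ↦ G x (f x)
  have hGf : ∀ f : ℝ → ℝ, Continuous f → ContinuousOn (fun x => G x (f x)) (Icc (0:ℝ) 1) := by
    intro f hf x hx
    rw [Metric.continuousWithinAt_iff]
    intro η hη
    obtain ⟨δ₁, hδ₁, hδ₁'⟩ := hunif (η/3) (by linarith)
    obtain ⟨δ₂, hδ₂, hδ₂'⟩ := Metric.continuous_iff.1 ((hGy x hx).comp hf) x (η/3) (by linarith)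
    refine ⟨min δ₁ δ₂, by positivity, fun x' hx' hd => ?_⟩
    have hd1 : |x' - x| < δ₁ := lt_of_lt_of_le (by simpa [Real.dist_eq] using hd) (min_le_left _ _)
    have hd2 : dist x' x < δ₂ := lt_of_lt_of_le hd (min_le_right _ _)
    have e1 : |G x' (f x') - G x (f x')| ≤ η/3 := hδ₁' x' hx' x hx hd1 (f x')
    have e2 : dist (G x (f x')) (G x (f x)) < η/3 := hδ₂' x' hd2
    rw [Real.dist_eq] at e2 ⊢
    calc |G x' (f x') - G x (f x)| ≤ |G x' (f x') - G x (f x')| + |G x (f x') - G x (f x)| := by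
          have := abs_sub_abs_le_abs_sub (G x' (f x')) (G x (f x')); exact abs_sub_le _ _ _
      _ < η/3 + η/3 := by linarith
      _ < η := by linarith
  -- modulus of continuity of F
  have hFmod : ∀ η : ℝ, 0 < η → ∃ δ : ℝ, 0 < δ ∧ ∀ x ∈ Icc (0:ℝ) 1, ∀ x' ∈ Icc (0:ℝ) 1,
      |x - x'| < δ → |F x - F x'| ≤ η := by
    intro η hη
    obtain ⟨δG, hδG, hδG'⟩ := hunif (η * L' / (3 * L)) (by positivity)
    have hlu := Metric.uniformContinuousOn_iff.1
      (isCompact_Icc.uniformContinuousOn_of_continuous hlcont)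
    set εl : ℝ := min (η * L' / (3 * (G₁ + 1))) (η * L' * L' / (3 * (L * G₁ + 1))) with hεldef
    have hεlpos : 0 < εl := lt_min (by positivity) (by positivity)
    obtain ⟨δl, hδl, hδl'⟩ := hlu εl hεlpos
    refine ⟨min δG δl, lt_min hδG hδl, fun x hx x' hx' hd => ?_⟩
    have hdG : |x - x'| < δG := lt_of_lt_of_le hd (min_le_left _ _)
    have hdl : dist x x' < δl := by
      rw [Real.dist_eq]; exact lt_of_lt_of_le hd (min_le_right _ _)
    have hΔl : |l x - l x'| < εl := by rw [← Real.dist_eq]; exact hδl' x hx x' hx' hdl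
    have hlx := hlpos x hx
    have hlx' := hlpos x' hx'
    have hLx := hlL x hx
    have hLx' := hlL x' hx'
    have hint1 := (hGy x hx).intervalIntegrable (μ := MeasureTheory.volume)
    have hint2 := (hGy x' hx').intervalIntegrable (μ := MeasureTheory.volume)
    set I1 : ℝ := ∫ s in (0:ℝ)..(l x), G x s with hI1
    set I2 : ℝ := ∫ s in (0:ℝ)..(l x), G x' s with hI2
    set I3 : ℝ := ∫ s in (0:ℝ)..(l x'), G x' s with hI3
    have e1 : |I1 - I2| ≤ η * L' / (3 * L) * L := by
      have hs : I1 - I2 = ∫ s in (0:ℝ)..(l x), (G x s - G x' s) :=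
        (intervalIntegral.integral_sub (hint1 0 (l x)) (hint2 0 (l x))).symm
      rw [hs]
      have hb := intervalIntegral.norm_integral_le_of_norm_le_const
          (a := 0) (b := l x) (C := η * L' / (3*L)) (f := fun s => G x s - G x' s)
          (fun s _ => by rw [Real.norm_eq_abs]; exact hδG' x hx x' hx' hdG s)
      rw [Real.norm_eq_abs] at hb
      calc |∫ s in (0:ℝ)..(l x), (G x s - G x' s)| ≤ (η * L' / (3*L)) * |l x - 0| := hb
        _ ≤ η * L' / (3 * L) * L := by
            rw [sub_zero, abs_of_pos hlx]
            exact mul_le_mul_of_nonneg_left hLx.2 (by positivity)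
    have e2 : |I2 - I3| ≤ G₁ * εl := by
      have hs : I2 - I3 = ∫ s in (l x')..(l x), G x' s := by
        rw [hI2, hI3,
          ← intervalIntegral.integral_add_adjacent_intervals (hint2 0 (l x')) (hint2 (l x') (l x))]
        ring
      rw [hs]
      calc |∫ s in (l x')..(l x), G x' s| ≤ G₁ * |l x - l x'| :=
            intervalIntegral.norm_integral_le_of_norm_le_const (fun s _ => by
              rw [Real.norm_eq_abs, abs_of_nonneg (hGbd x' hx' s).1]; exact (hGbd x' hx' s).2)
        _ ≤ G₁ * εl := mul_le_mul_of_nonneg_left hΔl.le hG₁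
    have e3 : |I3| ≤ G₁ * L := by
      calc |I3| ≤ G₁ * |l x' - 0| :=
            intervalIntegral.norm_integral_le_of_norm_le_const (fun s _ => by
              rw [Real.norm_eq_abs, abs_of_nonneg (hGbd x' hx' s).1]; exact (hGbd x' hx' s).2)
        _ ≤ G₁ * L := by
            rw [sub_zero, abs_of_pos hlx']
            exact mul_le_mul_of_nonneg_left hLx'.2 hG₁
    have hsplit : F x - F x' = (1/l x) * (I1 - I2) + (1/l x) * (I2 - I3)
        + (1/l x - 1/l x') * I3 := by
      simp only [hFdef]
      rw [← hI1, ← hI3]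
      ring
    have hinv : (0:ℝ) < 1 / l x := by positivity
    have h1l : 1 / l x ≤ 1 / L' := one_div_le_one_div_of_le hL' hLx.1
    have b1 : |(1/l x) * (I1 - I2)| ≤ η / 3 := by
      rw [abs_mul, abs_of_pos hinv]
      calc (1/l x) * |I1 - I2| ≤ (1/L') * (η * L' / (3 * L) * L) :=
            mul_le_mul h1l e1 (abs_nonneg _) (by positivity)
        _ = η / 3 := by field_simp
    have b2 : |(1/l x) * (I2 - I3)| ≤ η / 3 := by
      rw [abs_mul, abs_of_pos hinv]
      have h2 : (1/l x) * |I2 - I3| ≤ (1/L') * (G₁ * (η * L' / (3 * (G₁ + 1)))) := by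
        apply mul_le_mul h1l _ (abs_nonneg _) (by positivity)
        exact le_trans e2 (mul_le_mul_of_nonneg_left (min_le_left _ _) hG₁)
      refine h2.trans ?_
      have heq : (1/L') * (G₁ * (η * L' / (3 * (G₁ + 1)))) = η * (G₁ / (G₁ + 1)) / 3 := by
        field_simp
      rw [heq]
      have hfrac : G₁ / (G₁ + 1) ≤ 1 := (div_le_one (by positivity)).2 (by linarith)
      calc η * (G₁ / (G₁ + 1)) / 3 ≤ η * 1 / 3 := by gcongr
        _ = η / 3 := by ring
    have b3 : |(1/l x - 1/l x') * I3| ≤ η / 3 := by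
      have hdabs : |1/l x - 1/l x'| ≤ εl / (L' * L') := by
        rw [div_sub_div _ _ hlx.ne' hlx'.ne', abs_div]
        apply div_le_div₀ hεlpos.le _ (by positivity) _
        · rw [one_mul, mul_one, abs_sub_comm]
          exact hΔl.le
        · rw [abs_of_pos (by positivity)]
          exact mul_le_mul hLx.1 hLx'.1 hL'.le (by linarith)
      rw [abs_mul]
      have h2 : |1/l x - 1/l x'| * |I3| ≤ (εl / (L' * L')) * (G₁ * L) :=
        mul_le_mul hdabs e3 (abs_nonneg _) (by positivity)
      refine h2.trans ?_
      have hεl2 : εl ≤ η * L' * L' / (3 * (L * G₁ + 1)) := min_le_right _ _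
      have h3 : (εl / (L' * L')) * (G₁ * L)
          ≤ ((η * L' * L' / (3 * (L * G₁ + 1))) / (L' * L')) * (G₁ * L) := by gcongr
      refine h3.trans ?_
      have heq : ((η * L' * L' / (3 * (L * G₁ + 1))) / (L' * L')) * (G₁ * L)
          = η * ((L * G₁) / (L * G₁ + 1)) / 3 := by
        field_simp
      rw [heq]
      have hfrac : (L * G₁) / (L * G₁ + 1) ≤ 1 := by
        apply (div_le_one (by positivity)).2
        linarith
      calc η * ((L * G₁) / (L * G₁ + 1)) / 3 ≤ η * 1 / 3 := by gcongr
        _ = η / 3 := by ring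
    calc |F x - F x'| = |(1/l x) * (I1 - I2) + (1/l x) * (I2 - I3)
          + (1/l x - 1/l x') * I3| := by rw [hsplit]
      _ ≤ |(1/l x) * (I1 - I2)| + |(1/l x) * (I2 - I3)| + |(1/l x - 1/l x') * I3| :=
          abs_add_three _ _ _
      _ ≤ η/3 + η/3 + η/3 := by linarith
      _ = η := by ring
  have hFcont : ContinuousOn F (Icc (0:ℝ) 1) := by
    intro x hx
    rw [Metric.continuousWithinAt_iff]
    intro η hη
    obtain ⟨δ, hδ, hδ'⟩ := hFmod (η/2) (by linarith)
    refine ⟨δ, hδ, fun x' hx' hd => ?_⟩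
    rw [Real.dist_eq] at hd ⊢
    calc |F x' - F x| ≤ η/2 := hδ' x' hx' x hx hd
      _ < η := by linarith
  -- oscillation estimate
  have hosc : ∀ x₀ ∈ Icc (0:ℝ) 1, ∀ a b : ℝ, a ≤ b → ∀ c : ℝ, 0 < c →
      |(∫ x in a..b, G x₀ (x / c)) - (b - a) * F x₀| ≤ 2 * L * G₁ * c := by
    intro x₀ hx₀ a b hab c hc
    have hT := hlpos x₀ hx₀
    have hgper : Function.Periodic (fun y => G x₀ y) (l x₀) := fun y => hper x₀ hx₀ y
    have havg := averaging hT hgper (hGy x₀ hx₀) (fun y => (hGbd x₀ hx₀ y).1)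
      (fun y => (hGbd x₀ hx₀ y).2) (div_le_div_of_nonneg_right hab hc.le)
    rw [intervalIntegral.integral_comp_div (f := fun y => G x₀ y) hc.ne', smul_eq_mul]
    have hT' : l x₀ ≠ 0 := hT.ne'
    have heq : c * (∫ x in a/c..b/c, G x₀ x) - (b - a) * F x₀
        = c * ((∫ x in a/c..b/c, G x₀ x)
            - (b/c - a/c)/(l x₀) * ∫ x in (0:ℝ)..(l x₀), G x₀ x) := by
      simp only [hFdef]
      field_simp
    rw [heq, abs_mul, abs_of_pos hc]
    have hTL : l x₀ ≤ L := (hlL x₀ hx₀).2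
    calc c * |(∫ x in a/c..b/c, G x₀ x)
          - (b/c - a/c)/(l x₀) * ∫ x in (0:ℝ)..(l x₀), G x₀ x|
        ≤ c * (2 * l x₀ * G₁) := mul_le_mul_of_nonneg_left havg hc.le
      _ ≤ 2 * L * G₁ * c := by
          nlinarith [mul_nonneg (mul_nonneg hc.le hG₁) (sub_nonneg.2 hTL)]
  -- convergence against continuous test functions
  have hg1 : ∀ c : ℝ, ContinuousOn (fun x => G x (x/c)) (Icc (0:ℝ) 1) :=
    fun c => hGf (fun x => x/c) (continuous_id.div_const c)
  have hP : ∀ ψ : ℝ → ℝ, Continuous ψ →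
      Tendsto (fun ε : ℝ => ∫ x in (0:ℝ)..1, (G x (x / ε ^ α) - F x) * ψ x)
        (nhdsWithin 0 (Ioi 0)) (nhds 0) := by
    intro ψ hψ
    rw [NormedAddCommGroup.tendsto_nhds_zero]
    intro η hη
    -- bound on ψ
    obtain ⟨xM, _, hxM'⟩ := isCompact_Icc.exists_isMaxOn (Set.nonempty_Icc.2 zero_le_one)
      (hψ.abs.continuousOn (s := Icc (0:ℝ) 1))
    set M : ℝ := |ψ xM| + 1 with hMdef
    have hM1 : 1 ≤ M := by have := abs_nonneg (ψ xM); linarith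
    have hMpos : 0 < M := by linarith
    have hM : ∀ x ∈ Icc (0:ℝ) 1, |ψ x| ≤ M := fun x hx => by
      have h := hxM' hx; simp only [Set.mem_setOf_eq] at h; simp only [hMdef]; linarith
    -- moduli
    have hψu : UniformContinuousOn ψ (Icc (0:ℝ) 1) :=
      isCompact_Icc.uniformContinuousOn_of_continuous hψ.continuousOn
    obtain ⟨δψ, hδψ, hδψ'⟩ := Metric.uniformContinuousOn_iff.1 hψu (η/(10*(G₁+1))) (by positivity)
    obtain ⟨δ₁, hδ₁, hδ₁'⟩ := hunif (η/(10*M)) (by positivity)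
    obtain ⟨δF, hδF, hδF'⟩ := hFmod (η/(10*M)) (by positivity)
    set δm : ℝ := min δψ (min δ₁ δF) with hδmdef
    have hδm : 0 < δm := lt_min hδψ (lt_min hδ₁ hδF)
    obtain ⟨N, hNgt⟩ := exists_nat_gt (1/δm)
    have hNpos : 0 < (N:ℝ) := lt_trans (by positivity) hNgt
    have hN0 : (N:ℝ) ≠ 0 := hNpos.ne'
    have hNδ : 1/(N:ℝ) < δm := by
      rw [div_lt_iff₀ hNpos]
      rw [div_lt_iff₀ hδm] at hNgt
      linarith [mul_comm δm (N:ℝ)]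
    -- per-interval estimate
    have key : ∀ c : ℝ, 0 < c → ∀ i : ℕ, i < N →
        |∫ x in ((i:ℝ)/N)..(((i:ℝ)+1)/N), (G x (x/c) - F x) * ψ x|
          ≤ (1/(N:ℝ))*(3*(η/10)) + M*(2*L*G₁*c) := by
      intro c hc i hi
      set a : ℝ := (i:ℝ)/N with hadef
      set b : ℝ := ((i:ℝ)+1)/N with hbdef
      have hab : a ≤ b := by
        apply div_le_div_of_nonneg_right (by linarith) hNpos.le
      have hiN : (i:ℝ) + 1 ≤ (N:ℝ) := by exact_mod_cast Nat.succ_le_of_lt hi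
      have hi0 : (0:ℝ) ≤ (i:ℝ) := Nat.cast_nonneg i
      have ha01 : a ∈ Icc (0:ℝ) 1 := ⟨by positivity, by
        rw [hadef, div_le_one hNpos]; linarith⟩
      have hb01 : b ∈ Icc (0:ℝ) 1 := ⟨by positivity, by
        rw [hbdef, div_le_one hNpos]; linarith⟩
      have hba : b - a = 1/(N:ℝ) := by rw [hadef, hbdef]; ring
      have hsub : Icc a b ⊆ Icc (0:ℝ) 1 := fun x hx =>
        ⟨le_trans ha01.1 hx.1, le_trans hx.2 hb01.2⟩
      have hsubu : uIcc a b ⊆ Icc (0:ℝ) 1 := by rw [uIcc_of_le hab]; exact hsub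
      have c1 : ContinuousOn (fun x => G x (x/c)) (uIcc a b) := (hg1 c).mono hsubu
      have c2 : Continuous (fun x : ℝ => G a (x/c)) :=
        (hGy a ha01).comp (continuous_id.div_const c)
      have cF : ContinuousOn F (uIcc a b) := hFcont.mono hsubu
      have i1 : IntervalIntegrable (fun x => (G x (x/c) - G a (x/c)) * ψ x)
          MeasureTheory.volume a b :=
        ((c1.sub c2.continuousOn).mul hψ.continuousOn).intervalIntegrable
      have i2 : IntervalIntegrable (fun x => (G a (x/c) - F a) * (ψ x - ψ a))
          MeasureTheory.volume a b :=
        ((c2.continuousOn.sub continuousOn_const).mul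
          (hψ.continuousOn.sub continuousOn_const)).intervalIntegrable
      have i3 : IntervalIntegrable (fun x => (F a - F x) * ψ x) MeasureTheory.volume a b :=
        ((continuousOn_const.sub cF).mul hψ.continuousOn).intervalIntegrable
      have i0 : IntervalIntegrable (fun x => (G a (x/c) - F a) * ψ a) MeasureTheory.volume a b :=
        ((c2.continuousOn.sub continuousOn_const).mul continuousOn_const).intervalIntegrable
      have hIsplit : (∫ x in a..b, (G x (x/c) - F x) * ψ x)
          = (∫ x in a..b, (G a (x/c) - F a) * ψ a)
            + ∫ x in a..b, ((G x (x/c) - G a (x/c)) * ψ x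
              + ((G a (x/c) - F a) * (ψ x - ψ a) + (F a - F x) * ψ x)) := by
        rw [← intervalIntegral.integral_add i0 (i1.add (i2.add i3))]
        exact intervalIntegral.integral_congr (fun x _ => by ring)
      have hB : |∫ x in a..b, (G a (x/c) - F a) * ψ a| ≤ M * (2*L*G₁*c) := by
        have e : (∫ x in a..b, (G a (x/c) - F a) * ψ a)
            = ((∫ x in a..b, G a (x/c)) - (b - a) * F a) * ψ a := by
          rw [intervalIntegral.integral_mul_const, intervalIntegral.integral_sub
            (c2.continuousOn.intervalIntegrable) intervalIntegrable_const,
            intervalIntegral.integral_const, smul_eq_mul]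
        rw [e, abs_mul]
        calc |(∫ x in a..b, G a (x/c)) - (b-a)*F a| * |ψ a|
            ≤ (2*L*G₁*c) * M :=
              mul_le_mul (hosc a ha01 a b hab c hc) (hM a ha01) (abs_nonneg _)
                (mul_nonneg (mul_nonneg (mul_nonneg (by norm_num) hL.le) hG₁) hc.le)
          _ = M * (2*L*G₁*c) := mul_comm _ _
      have hpt : ∀ x ∈ Set.uIoc a b, ‖(G x (x/c) - G a (x/c)) * ψ x
          + ((G a (x/c) - F a) * (ψ x - ψ a) + (F a - F x) * ψ x)‖ ≤ 3*(η/10) := by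
        intro x hx
        have hxab : x ∈ Icc a b := by
          rw [Set.uIoc_of_le hab] at hx; exact ⟨hx.1.le, hx.2⟩
        have hx01 : x ∈ Icc (0:ℝ) 1 := hsub hxab
        have hdxa : |x - a| < δm := by
          rw [abs_of_nonneg (by linarith [hxab.1])]
          calc x - a ≤ b - a := by linarith [hxab.2]
            _ = 1/(N:ℝ) := hba
            _ < δm := hNδ
        have hd1 : |x - a| < δ₁ :=
          lt_of_lt_of_le hdxa (le_trans (min_le_right _ _) (min_le_left _ _))
        have hdF : |x - a| < δF :=
          lt_of_lt_of_le hdxa (le_trans (min_le_right _ _) (min_le_right _ _))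
        have hdψ : dist x a < δψ := by
          rw [Real.dist_eq]; exact lt_of_lt_of_le hdxa (min_le_left _ _)
        have b1 : |(G x (x/c) - G a (x/c)) * ψ x| ≤ η/10 := by
          rw [abs_mul]
          calc |G x (x/c) - G a (x/c)| * |ψ x| ≤ (η/(10*M)) * M :=
              mul_le_mul (hδ₁' x hx01 a ha01 hd1 (x/c)) (hM x hx01) (abs_nonneg _)
                (by positivity)
            _ = η/10 := by field_simp
        have b2 : |(G a (x/c) - F a) * (ψ x - ψ a)| ≤ η/10 := by
          rw [abs_mul]
          have hGa := hGbd a ha01 (x/c)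
          have hFa := hFbd a ha01
          have h1 : |G a (x/c) - F a| ≤ G₁ := by
            rw [abs_sub_le_iff]; constructor <;> linarith [hGa.1, hGa.2, hFa.1, hFa.2]
          have h2 : |ψ x - ψ a| ≤ η/(10*(G₁+1)) := by
            have := hδψ' x hx01 a ha01 hdψ; rw [Real.dist_eq] at this; exact this.le
          calc |G a (x/c) - F a| * |ψ x - ψ a| ≤ G₁ * (η/(10*(G₁+1))) :=
              mul_le_mul h1 h2 (abs_nonneg _) hG₁
            _ = (η/10) * (G₁/(G₁+1)) := by field_simp
            _ ≤ (η/10) * 1 := by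
                gcongr
                exact (div_le_one (by positivity)).2 (by linarith)
            _ = η/10 := mul_one _
        have b3 : |(F a - F x) * ψ x| ≤ η/10 := by
          rw [abs_mul]
          calc |F a - F x| * |ψ x| ≤ (η/(10*M)) * M :=
              mul_le_mul (hδF' a ha01 x hx01 (by rwa [abs_sub_comm])) (hM x hx01)
                (abs_nonneg _) (by positivity)
            _ = η/10 := by field_simp
        rw [Real.norm_eq_abs]
        calc |(G x (x/c) - G a (x/c)) * ψ x
              + ((G a (x/c) - F a) * (ψ x - ψ a) + (F a - F x) * ψ x)|
            ≤ |(G x (x/c) - G a (x/c)) * ψ x|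
              + |(G a (x/c) - F a) * (ψ x - ψ a) + (F a - F x) * ψ x| := abs_add_le _ _
          _ ≤ |(G x (x/c) - G a (x/c)) * ψ x|
              + (|(G a (x/c) - F a) * (ψ x - ψ a)| + |(F a - F x) * ψ x|) := by
                linarith [abs_add_le ((G a (x/c) - F a) * (ψ x - ψ a)) ((F a - F x) * ψ x)]
          _ ≤ 3*(η/10) := by linarith
      have hT : |∫ x in a..b, ((G x (x/c) - G a (x/c)) * ψ x
          + ((G a (x/c) - F a) * (ψ x - ψ a) + (F a - F x) * ψ x))| ≤ (3*(η/10)) * |b - a| := by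
        have := intervalIntegral.norm_integral_le_of_norm_le_const hpt
        rwa [Real.norm_eq_abs] at this
      rw [hIsplit]
      calc |(∫ x in a..b, (G a (x/c) - F a) * ψ a)
            + ∫ x in a..b, ((G x (x/c) - G a (x/c)) * ψ x
              + ((G a (x/c) - F a) * (ψ x - ψ a) + (F a - F x) * ψ x))|
          ≤ M * (2*L*G₁*c) + (3*(η/10)) * |b - a| := (abs_add_le _ _).trans (add_le_add hB hT)
        _ = (1/(N:ℝ))*(3*(η/10)) + M*(2*L*G₁*c) := by
            rw [hba, abs_of_pos (by positivity)]; ring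
    -- choose δε and conclude
    set Cosc : ℝ := M*(2*L*G₁) + 1 with hCdef
    have hMLG : 0 ≤ M*(2*L*G₁) :=
      mul_nonneg hMpos.le (mul_nonneg (mul_nonneg (by norm_num) hL.le) hG₁)
    have hCpos : 0 < Cosc := by simp only [hCdef]; linarith
    set δε : ℝ := min 1 (η/(10*N*Cosc)) with hδεdef
    have hδεpos : 0 < δε := lt_min one_pos (by positivity)
    filter_upwards [Ioo_mem_nhdsGT_of_mem (Set.left_mem_Ico.2 hδεpos)] with ε hε
    obtain ⟨hε0, hεδ⟩ := hε
    set c : ℝ := ε ^ α with hcdef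
    have hc : 0 < c := Real.rpow_pos_of_pos hε0 α
    have hcε : c ≤ ε := by
      calc c = ε ^ α := rfl
        _ ≤ ε ^ (1:ℝ) := Real.rpow_le_rpow_of_exponent_ge hε0
            (le_trans hεδ.le (min_le_left _ _)) hα.le
        _ = ε := Real.rpow_one ε
    rw [Real.norm_eq_abs]
    set A : ℕ → ℝ := fun k => (k:ℝ)/N with hAdef
    have hAcast : ∀ k : ℕ, A (k+1) = ((k:ℝ)+1)/N := by
      intro k; simp only [hAdef]; push_cast; ring
    have hintk : ∀ k : ℕ, k < N →
        IntervalIntegrable (fun x => (G x (x/c) - F x) * ψ x) MeasureTheory.volume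
          (A k) (A (k+1)) := by
      intro k hk
      apply ContinuousOn.intervalIntegrable
      apply (((hg1 c).sub hFcont).mul hψ.continuousOn).mono
      rw [hAcast k]
      have hk1 : (k:ℝ) + 1 ≤ (N:ℝ) := by exact_mod_cast Nat.succ_le_of_lt hk
      have hab : A k ≤ ((k:ℝ)+1)/N := by
        apply div_le_div_of_nonneg_right (by linarith) hNpos.le
      rw [uIcc_of_le hab]
      intro x hx
      constructor
      · have : (0:ℝ) ≤ A k := by positivity
        linarith [hx.1]
      · have : ((k:ℝ)+1)/N ≤ 1 := by rw [div_le_one hNpos]; linarith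
        linarith [hx.2]
    have hsum := intervalIntegral.sum_integral_adjacent_intervals hintk
    have hA0 : A 0 = 0 := by simp [hAdef]
    have hAN : A N = 1 := by simp only [hAdef]; field_simp
    calc |∫ x in (0:ℝ)..1, (G x (x/c) - F x) * ψ x|
        = |∑ k ∈ Finset.range N, ∫ x in (A k)..(A (k+1)), (G x (x/c) - F x) * ψ x| := by
          rw [hsum, hA0, hAN]
      _ ≤ ∑ k ∈ Finset.range N, |∫ x in (A k)..(A (k+1)), (G x (x/c) - F x) * ψ x| :=
          Finset.abs_sum_le_sum_abs _ _
      _ ≤ ∑ k ∈ Finset.range N, ((1/(N:ℝ))*(3*(η/10)) + M*(2*L*G₁*c)) :=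
          Finset.sum_le_sum (fun k hk => by
            rw [hAcast k]
            exact key c hc k (Finset.mem_range.1 hk))
      _ = (N:ℝ) * ((1/(N:ℝ))*(3*(η/10)) + M*(2*L*G₁*c)) := by
          rw [Finset.sum_const, Finset.card_range, nsmul_eq_mul]
      _ < η := by
          have h1 : c < η/(10*N*Cosc) := lt_of_le_of_lt hcε
            (lt_of_lt_of_le hεδ (min_le_right _ _))
          have h2 : (N:ℝ)*Cosc*c < (N:ℝ)*Cosc*(η/(10*N*Cosc)) :=
            mul_lt_mul_of_pos_left h1 (by positivity)
          have h3 : (N:ℝ)*Cosc*(η/(10*N*Cosc)) = η/10 := by field_simp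
          have h4 : (N:ℝ) * ((1/(N:ℝ))*(3*(η/10)) + M*(2*L*G₁*c))
              = 3*(η/10) + (N:ℝ)*(M*(2*L*G₁))*c := by field_simp
          have h5 : (N:ℝ)*(M*(2*L*G₁))*c ≤ (N:ℝ)*Cosc*c := by
            apply mul_le_mul_of_nonneg_right _ hc.le
            apply mul_le_mul_of_nonneg_left _ hNpos.le
            simp only [hCdef]; linarith
          rw [h4]
          have h6 : (N:ℝ)*(M*(2*L*G₁))*c < η/10 := lt_of_le_of_lt h5 (h3 ▸ h2)
          linarith
  -- density argument
  intro φ hφ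
  have hIoc : MeasureTheory.volume.restrict (Ioc (0:ℝ) 1)
      = MeasureTheory.volume.restrict (Ioo (0:ℝ) 1) :=
    (MeasureTheory.Measure.restrict_congr_set Ioo_ae_eq_Ioc).symm
  have hIval : ∀ f : ℝ → ℝ, (∫ x in (0:ℝ)..1, f x) = ∫ x in Ioo (0:ℝ) 1, f x := by
    intro f; rw [intervalIntegral.integral_of_le zero_le_one, hIoc]
  have hmeas : ∀ g : ℝ → ℝ, ContinuousOn g (Icc (0:ℝ) 1) →
      MeasureTheory.AEStronglyMeasurable g
        (MeasureTheory.volume.restrict (Ioo (0:ℝ) 1)) := fun g hg =>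
    (hg.mono Ioo_subset_Icc_self).aestronglyMeasurable measurableSet_Ioo
  have hbddmul : ∀ g : ℝ → ℝ, ContinuousOn g (Icc (0:ℝ) 1) →
      (∀ x ∈ Icc (0:ℝ) 1, |g x| ≤ G₁) →
      ∀ h : ℝ → ℝ, MeasureTheory.IntegrableOn h (Ioo (0:ℝ) 1) MeasureTheory.volume →
      MeasureTheory.IntegrableOn (fun x => g x * h x) (Ioo (0:ℝ) 1) MeasureTheory.volume := by
    intro g hg hgb h hh
    apply MeasureTheory.Integrable.bdd_mul hh (hmeas g hg)
    apply (MeasureTheory.ae_restrict_iff' measurableSet_Ioo).2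
    exact MeasureTheory.ae_of_all _ (fun x hx => by
      rw [Real.norm_eq_abs]; exact hgb x (Ioo_subset_Icc_self hx))
  have hgεbd : ∀ c : ℝ, ∀ x ∈ Icc (0:ℝ) 1, |G x (x/c) - F x| ≤ G₁ := by
    intro c x hx
    have h1 := hGbd x hx (x/c)
    have h2 := hFbd x hx
    rw [abs_sub_le_iff]; constructor <;> linarith [h1.1, h1.2, h2.1, h2.2]
  have hgεcont : ∀ c : ℝ, ContinuousOn (fun x => G x (x/c) - F x) (Icc (0:ℝ) 1) :=
    fun c => (hg1 c).sub hFcont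
  have hmain : Tendsto (fun ε : ℝ => ∫ x in (0:ℝ)..1, (G x (x / ε ^ α) - F x) * φ x)
      (nhdsWithin 0 (Ioi 0)) (nhds 0) := by
    rw [NormedAddCommGroup.tendsto_nhds_zero]
    intro η hη
    set φ' : ℝ → ℝ := (Ioo (0:ℝ) 1).indicator φ with hφ'def
    have hφ'int : MeasureTheory.Integrable φ' MeasureTheory.volume :=
      (MeasureTheory.integrable_indicator_iff measurableSet_Ioo).2 hφ
    obtain ⟨ψ, hψsupp, hψnear, hψcont, hψint⟩ :=
      hφ'int.exists_hasCompactSupport_integral_sub_le (ε := η/(4*(G₁+1))) (by positivity)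
    have hPψ := NormedAddCommGroup.tendsto_nhds_zero.1 (hP ψ hψcont) (η/2) (by linarith)
    filter_upwards [hPψ, self_mem_nhdsWithin] with ε hψb hε0
    rw [Real.norm_eq_abs] at hψb ⊢
    set c : ℝ := ε ^ α with hcdef
    set g : ℝ → ℝ := fun x => G x (x/c) - F x with hgdef
    have hψb' : |∫ x in (0:ℝ)..1, g x * ψ x| < η/2 := hψb
    have hint1 : MeasureTheory.IntegrableOn (fun x => g x * (φ x - ψ x))
        (Ioo (0:ℝ) 1) MeasureTheory.volume :=
      hbddmul g (hgεcont c) (hgεbd c) _ (hφ.sub hψint.integrableOn)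
    have hint2 : MeasureTheory.IntegrableOn (fun x => g x * ψ x)
        (Ioo (0:ℝ) 1) MeasureTheory.volume :=
      (((hgεcont c).mul hψcont.continuousOn).integrableOn_Icc).mono_set Ioo_subset_Icc_self
    have hsplit : (∫ x in Ioo (0:ℝ) 1, g x * φ x)
        = (∫ x in Ioo (0:ℝ) 1, g x * (φ x - ψ x)) + ∫ x in Ioo (0:ℝ) 1, g x * ψ x := by
      rw [← MeasureTheory.integral_add hint1 hint2]
      exact MeasureTheory.integral_congr_ae (MeasureTheory.ae_of_all _ (fun x => by ring))
    have hb1 : |∫ x in Ioo (0:ℝ) 1, g x * (φ x - ψ x)| ≤ η/4 := by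
      have hn : ‖∫ x in Ioo (0:ℝ) 1, g x * (φ x - ψ x)‖
          ≤ ∫ x in Ioo (0:ℝ) 1, ‖g x * (φ x - ψ x)‖ :=
        MeasureTheory.norm_integral_le_integral_norm _
      have hmono : (∫ x in Ioo (0:ℝ) 1, ‖g x * (φ x - ψ x)‖)
          ≤ ∫ x in Ioo (0:ℝ) 1, G₁ * ‖φ' x - ψ x‖ := by
        apply MeasureTheory.integral_mono_of_nonneg
        · exact MeasureTheory.ae_of_all _ (fun x => norm_nonneg _)
        · exact (((hφ'int.sub hψint).norm).const_mul G₁).integrableOn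
        · apply (MeasureTheory.ae_restrict_iff' measurableSet_Ioo).2
          apply MeasureTheory.ae_of_all
          intro x hx
          have hφ'x : φ' x = φ x := Set.indicator_of_mem hx φ
          simp only [Real.norm_eq_abs, abs_mul, hφ'x]
          exact mul_le_mul (hgεbd c x (Ioo_subset_Icc_self hx)) le_rfl (abs_nonneg _) hG₁
      have hle : (∫ x in Ioo (0:ℝ) 1, G₁ * ‖φ' x - ψ x‖) ≤ G₁ * (η/(4*(G₁+1))) := by
        rw [MeasureTheory.integral_const_mul]
        apply mul_le_mul_of_nonneg_left _ hG₁
        calc (∫ x in Ioo (0:ℝ) 1, ‖φ' x - ψ x‖) ≤ ∫ x, ‖φ' x - ψ x‖ :=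
              MeasureTheory.setIntegral_le_integral (hφ'int.sub hψint).norm
                (MeasureTheory.ae_of_all _ (fun x => norm_nonneg _))
          _ ≤ η/(4*(G₁+1)) := hψnear
      have hfin : G₁ * (η/(4*(G₁+1))) ≤ η/4 := by
        have heq : G₁ * (η/(4*(G₁+1))) = (η/4) * (G₁/(G₁+1)) := by field_simp
        rw [heq]
        calc (η/4) * (G₁/(G₁+1)) ≤ (η/4) * 1 := by
              gcongr
              exact (div_le_one (by positivity)).2 (by linarith)
          _ = η/4 := mul_one _
      rw [← Real.norm_eq_abs]
      exact le_trans hn (le_trans hmono (le_trans hle hfin))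
    show |∫ x in (0:ℝ)..1, g x * φ x| < η
    calc |∫ x in (0:ℝ)..1, g x * φ x|
        = |(∫ x in Ioo (0:ℝ) 1, g x * (φ x - ψ x)) + ∫ x in Ioo (0:ℝ) 1, g x * ψ x| := by
          rw [hIval (fun x => g x * φ x), hsplit]
      _ ≤ |∫ x in Ioo (0:ℝ) 1, g x * (φ x - ψ x)| + |∫ x in Ioo (0:ℝ) 1, g x * ψ x| :=
          abs_add_le _ _
      _ < η/4 + η/2 := add_lt_add_of_le_of_lt hb1
          (by rw [← hIval (fun x => g x * ψ x)]; exact hψb')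
      _ < η := by linarith
  have hfin : ∀ ε : ℝ, (∫ x in (0:ℝ)..1, G x (x / ε ^ α) * φ x)
      = (∫ x in (0:ℝ)..1, (G x (x / ε ^ α) - F x) * φ x) + ∫ x in (0:ℝ)..1, F x * φ x := by
    intro ε
    rw [hIval (fun x => G x (x / ε ^ α) * φ x),
      hIval (fun x => (G x (x / ε ^ α) - F x) * φ x), hIval (fun x => F x * φ x)]
    have hFint : MeasureTheory.IntegrableOn (fun x => F x * φ x)
        (Ioo (0:ℝ) 1) MeasureTheory.volume :=
      hbddmul F hFcont (fun x hx => by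
        rw [abs_of_nonneg (hFbd x hx).1]; exact (hFbd x hx).2) φ hφ
    have hGint : MeasureTheory.IntegrableOn (fun x => (G x (x / ε ^ α) - F x) * φ x)
        (Ioo (0:ℝ) 1) MeasureTheory.volume :=
      hbddmul _ (hgεcont _) (hgεbd _) φ hφ
    rw [← MeasureTheory.integral_add hGint hFint]
    exact MeasureTheory.integral_congr_ae (MeasureTheory.ae_of_all _ (fun x => by ring))
  have hfinal := hmain.add
    (tendsto_const_nhds (x := ∫ x in (0:ℝ)..1, F x * φ x)
      (f := nhdsWithin (0:ℝ) (Ioi 0)))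
  rw [zero_add] at hfinal
  have heqfun : (fun ε : ℝ => ∫ x in (0:ℝ)..1, G x (x / ε ^ α) * φ x)
      = fun ε => (∫ x in (0:ℝ)..1, (G x (x / ε ^ α) - F x) * φ x)
        + ∫ x in (0:ℝ)..1, F x * φ x := funext hfin
  rw [heqfun]
  exact hfinal
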